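/- If Z is an outcast of a d-dimensional shift X, then there exists a strictly increasing sequence (Z_n)_{n∈ℕ} of subsystems of X such that Z₀ = Z and the closure of ∪_{n≥0} Z_n equals X. In particular, a shift possessing an outcast is not an isolated point of the space S^d. -/

import Mathlib

/-- The group `ℤ^d`. -/
abbrev ZD (d : ℕ) := Fin d → ℤ

/-- A configuration is a map `ℤ^d → ℤ`. -/
abbrev Config (d : ℕ) := ZD d → ℤ

/-- The shift map `σ^u`, defined by `σ^u(x)_v = x_{u+v}`. -/
def shiftMap {d : ℕ} (u : ZD d) (x : Config d) : Config d := fun v => x (u + v)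

/-- The sup norm `‖·‖_∞` on `ℤ^d`, valued in `ℕ`. -/
def normInf {d : ℕ} (n : ZD d) : ℕ := Finset.univ.sup fun i => (n i).natAbs

open Classical in
/-- The metric `δ` on configurations: `δ(x,y) = 2^{-min{‖n‖_∞ : x_n ≠ y_n}}`, `δ(x,x) = 0`. -/
noncomputable def deltaDist {d : ℕ} (x y : Config d) : ℝ :=
  if x = y then 0
  else (2 : ℝ) ^ (-((sInf {m : ℕ | ∃ n : ZD d, normInf n = m ∧ x n ≠ y n} : ℕ) : ℤ))

/-- The closure of a set of configurations with respect to the metric `δ`. -/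
def deltaClosure {d : ℕ} (A : Set (Config d)) : Set (Config d) :=
  {x | ∀ ε : ℝ, 0 < ε → ∃ a ∈ A, deltaDist x a < ε}

/-- A set of configurations is closed for `δ` when it contains all its limit points. -/
def IsDeltaClosed {d : ℕ} (A : Set (Config d)) : Prop := deltaClosure A ⊆ A

/-- A `d`-dimensional shift: a nonempty set of configurations over a common finite
alphabet, closed for `δ` and invariant under every shift map. -/
def IsShift {d : ℕ} (X : Set (Config d)) : Prop :=
  X.Nonempty ∧ (∃ A : Finset ℤ, ∀ x ∈ X, ∀ v : ZD d, x v ∈ A) ∧ IsDeltaClosed X ∧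
    ∀ u : ZD d, ∀ x ∈ X, shiftMap u x ∈ X

/-- The Hausdorff metric `δ_H` on the space of shifts. -/
noncomputable def deltaH {d : ℕ} (X Z : Set (Config d)) : ℝ :=
  max (⨆ x : X, ⨅ z : Z, deltaDist (x : Config d) (z : Config d))
      (⨆ z : Z, ⨅ x : X, deltaDist (x : Config d) (z : Config d))

/-- A subsystem of a shift `X`: a nonempty closed shift-invariant subset of `X`. -/
def IsSubsystem {d : ℕ} (Z X : Set (Config d)) : Prop :=
  Z.Nonempty ∧ Z ⊆ X ∧ IsDeltaClosed Z ∧ ∀ u : ZD d, ∀ z ∈ Z, shiftMap u z ∈ Z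

/-- A maximal subsystem of `X`: a proper subsystem such that any subsystem strictly
between it and `X` equals `X`. -/
def IsMaximalSubsystem {d : ℕ} (Z X : Set (Config d)) : Prop :=
  IsSubsystem Z X ∧ Z ≠ X ∧ ∀ Z', IsSubsystem Z' X → Z ⊂ Z' → Z' = X

/-- An outcast of `X`: a proper subsystem contained in no maximal subsystem of `X`. -/
def IsOutcast {d : ℕ} (Z X : Set (Config d)) : Prop :=
  IsSubsystem Z X ∧ Z ≠ X ∧ ∀ M, IsMaximalSubsystem M X → ¬ Z ⊆ M

/-- A pattern with finite support `U` (given by the values of `p` on `U`) appears in the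
configuration `x`. -/
def PatternAppears {d : ℕ} (U : Finset (ZD d)) (p : ZD d → ℤ) (x : Config d) : Prop :=
  ∃ u : ZD d, ∀ v ∈ U, x (u + v) = p v

/-- The set of configurations over the alphabet `A` avoiding every pattern in `F`. -/
def XofF {d : ℕ} (A : Finset ℤ) (F : Set (Finset (ZD d) × (ZD d → ℤ))) : Set (Config d) :=
  {x | (∀ v : ZD d, x v ∈ A) ∧ ∀ q ∈ F, ¬ PatternAppears q.1 q.2 x}

/-- A shift of finite type: defined by a finite alphabet and a finite set of forbidden
patterns. -/
def IsSFT {d : ℕ} (X : Set (Config d)) : Prop :=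
  ∃ (A : Finset ℤ) (F : Finset (Finset (ZD d) × (ZD d → ℤ))), X = XofF A (F : Set _)

/-- `X` is an isolated point of the subspace `S` (with the Hausdorff metric `δ_H`). -/
def IsolatedIn {d : ℕ} (S : Set (Set (Config d))) (X : Set (Config d)) : Prop :=
  X ∈ S ∧ ∃ ε : ℝ, 0 < ε ∧ ∀ Z ∈ S, deltaH X Z < ε → Z = X

/-- The orbit of a configuration under the shift action. -/
def orbit {d : ℕ} (x : Config d) : Set (Config d) := {y | ∃ u : ZD d, y = shiftMap u x}

/-- A shift is transitive when some point has dense orbit. -/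
def IsTransitive {d : ℕ} (X : Set (Config d)) : Prop :=
  IsShift X ∧ ∃ x ∈ X, X ⊆ deltaClosure (orbit x)

/-- A shift is minimal when its only subsystem is itself. -/
def IsMinimalShift {d : ℕ} (X : Set (Config d)) : Prop :=
  IsShift X ∧ ∀ Z, IsSubsystem Z X → Z = X


section Aux

variable {d : ℕ}

lemma natAbs_le_normInf (u : ZD d) (i : Fin d) : (u i).natAbs ≤ normInf u :=
  Finset.le_sup (f := fun i => (u i).natAbs) (Finset.mem_univ i)

lemma normInf_le_iff {u : ZD d} {m : ℕ} : normInf u ≤ m ↔ ∀ i, (u i).natAbs ≤ m := by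
  simp [normInf, Finset.sup_le_iff]

/-- Triangle inequality for the sup norm. -/
lemma normInf_add_le (u v : ZD d) : normInf (u + v) ≤ normInf u + normInf v := by
  refine normInf_le_iff.mpr fun i => ?_
  calc ((u + v) i).natAbs = (u i + v i).natAbs := rfl
    _ ≤ (u i).natAbs + (v i).natAbs := Int.natAbs_add_le _ _
    _ ≤ normInf u + normInf v :=
        add_le_add (natAbs_le_normInf u i) (natAbs_le_normInf v i)

/-- Two configurations agree on the (open) box of radius `m`. -/
def AgreeOn (m : ℕ) (x y : Config d) : Prop := ∀ v : ZD d, normInf v < m → x v = y v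

lemma AgreeOn.mono {m k : ℕ} {x y : Config d} (h : AgreeOn k x y) (hmk : m ≤ k) :
    AgreeOn m x y := fun v hv => h v (lt_of_lt_of_le hv hmk)

lemma AgreeOn.symm' {m : ℕ} {x y : Config d} (h : AgreeOn m x y) : AgreeOn m y x :=
  fun v hv => (h v hv).symm

lemma AgreeOn.trans' {m : ℕ} {x y z : Config d} (h1 : AgreeOn m x y) (h2 : AgreeOn m y z) :
    AgreeOn m x z := fun v hv => (h1 v hv).trans (h2 v hv)

lemma deltaDist_self (x : Config d) : deltaDist x x = 0 := by simp [deltaDist]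

lemma deltaDist_nonneg (x y : Config d) : 0 ≤ deltaDist x y := by
  unfold deltaDist
  split
  · exact le_refl 0
  · positivity

lemma deltaDist_le_of_agree {m : ℕ} {x y : Config d} (h : AgreeOn m x y) :
    deltaDist x y ≤ (2 : ℝ) ^ (-(m : ℤ)) := by
  unfold deltaDist
  split
  · positivity
  · rename_i hxy
    set S : Set ℕ := {k : ℕ | ∃ n : ZD d, normInf n = k ∧ x n ≠ y n} with hS
    have hSne : S.Nonempty := by
      obtain ⟨n, hn⟩ := Function.ne_iff.mp hxy
      exact ⟨normInf n, n, rfl, hn⟩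
    obtain ⟨n, hn1, hn2⟩ := Nat.sInf_mem hSne
    have hm : m ≤ sInf S := by
      rw [← hn1]
      by_contra hcon
      exact hn2 (h n (by omega))
    exact zpow_le_zpow_right₀ one_le_two (by exact_mod_cast neg_le_neg (by exact_mod_cast hm))

lemma agree_of_deltaDist_lt {m : ℕ} {x y : Config d}
    (h : deltaDist x y < (2 : ℝ) ^ (-(m : ℤ))) : ∀ v : ZD d, normInf v ≤ m → x v = y v := by
  intro v hv
  by_contra hne
  have hxy : x ≠ y := fun he => hne (by rw [he])
  rw [deltaDist, if_neg hxy] at h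
  set S : Set ℕ := {k : ℕ | ∃ n : ZD d, normInf n = k ∧ x n ≠ y n} with hS
  have hmem : normInf v ∈ S := ⟨v, rfl, hne⟩
  have hle : sInf S ≤ normInf v := Nat.sInf_le hmem
  have h2 : -((sInf S : ℕ) : ℤ) < -((m : ℕ) : ℤ) :=
    (zpow_lt_zpow_iff_right₀ (one_lt_two (α := ℝ))).mp h
  omega

lemma exists_neg_zpow_lt {ε : ℝ} (hε : 0 < ε) : ∃ m : ℕ, (2 : ℝ) ^ (-(m : ℤ)) < ε := by
  obtain ⟨n, hn⟩ := exists_pow_lt_of_lt_one hε (by norm_num : (1 / 2 : ℝ) < 1)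
  refine ⟨n, ?_⟩
  have : (2 : ℝ) ^ (-(n : ℤ)) = (1 / 2 : ℝ) ^ n := by
    rw [zpow_neg, zpow_natCast, one_div, inv_pow]
  rw [this]; exact hn

lemma zpow_neg_pos (m : ℕ) : (0 : ℝ) < (2 : ℝ) ^ (-(m : ℤ)) := by positivity

/-- Membership in the closure, characterized by agreement on boxes. -/
lemma mem_deltaClosure_iff {A : Set (Config d)} {x : Config d} :
    x ∈ deltaClosure A ↔ ∀ m : ℕ, ∃ a ∈ A, AgreeOn m x a := by
  constructor
  · intro h m
    obtain ⟨a, haA, ha⟩ := h ((2 : ℝ) ^ (-(m : ℤ))) (zpow_neg_pos m)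
    exact ⟨a, haA, fun v hv => agree_of_deltaDist_lt ha v hv.le⟩
  · intro h ε hε
    obtain ⟨m, hm⟩ := exists_neg_zpow_lt hε
    obtain ⟨a, haA, ha⟩ := h m
    exact ⟨a, haA, lt_of_le_of_lt (deltaDist_le_of_agree ha) hm⟩

lemma subset_deltaClosure (A : Set (Config d)) : A ⊆ deltaClosure A := fun a ha =>
  mem_deltaClosure_iff.mpr fun _ => ⟨a, ha, fun _ _ => rfl⟩

lemma deltaClosure_mono {A B : Set (Config d)} (h : A ⊆ B) :
    deltaClosure A ⊆ deltaClosure B := by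
  intro x hx
  rw [mem_deltaClosure_iff] at hx ⊢
  intro m
  obtain ⟨a, haA, ha⟩ := hx m
  exact ⟨a, h haA, ha⟩

lemma isDeltaClosed_deltaClosure (A : Set (Config d)) : IsDeltaClosed (deltaClosure A) := by
  intro x hx
  rw [mem_deltaClosure_iff] at hx
  rw [mem_deltaClosure_iff]
  intro m
  obtain ⟨y, hyA, hy⟩ := hx m
  obtain ⟨a, haA, ha⟩ := mem_deltaClosure_iff.mp hyA m
  exact ⟨a, haA, hy.trans' ha⟩

lemma deltaClosure_subset_of_closed {A B : Set (Config d)} (hAB : A ⊆ B)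
    (hB : IsDeltaClosed B) : deltaClosure A ⊆ B :=
  fun x hx => hB (deltaClosure_mono hAB hx)

lemma deltaClosure_shift_invariant {A : Set (Config d)}
    (hA : ∀ u : ZD d, ∀ a ∈ A, shiftMap u a ∈ A) :
    ∀ u : ZD d, ∀ x ∈ deltaClosure A, shiftMap u x ∈ deltaClosure A := by
  intro u x hx
  rw [mem_deltaClosure_iff] at hx ⊢
  intro m
  obtain ⟨a, haA, ha⟩ := hx (m + normInf u)
  refine ⟨shiftMap u a, hA u a haA, fun v hv => ha (u + v) ?_⟩
  have := normInf_add_le u v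
  omega

/-- A finite subset of a nonempty chain of sets has an upper bound in the chain. -/
lemma chain_ub_of_finite {α : Type*} {c : Set (Set α)} (hc : IsChain (· ⊆ ·) c)
    (hne : c.Nonempty) {s : Set (Set α)} (hs : s.Finite) :
    s ⊆ c → ∃ C ∈ c, ∀ y ∈ s, y ⊆ C := by
  refine Set.Finite.induction_on
    (motive := fun s _ => s ⊆ c → ∃ C ∈ c, ∀ y ∈ s, y ⊆ C) s hs ?_ ?_
  · intro _
    obtain ⟨C, hC⟩ := hne
    exact ⟨C, hC, fun y hy => absurd hy (Set.notMem_empty y)⟩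
  · intro a s _ _ ih hsub
    obtain ⟨C, hCc, hC⟩ := ih fun y hy => hsub (Set.mem_insert_of_mem a hy)
    have hac : a ∈ c := hsub (Set.mem_insert a s)
    rcases hc.total hac hCc with h | h
    · exact ⟨C, hCc, fun y hy => by
        rcases hy with rfl | hy
        exacts [h, hC y hy]⟩
    · exact ⟨a, hac, fun y hy => by
        rcases hy with rfl | hy
        exacts [subset_rfl, (hC y hy).trans h]⟩

/-- Truncation of a configuration to the closed box of radius `m`. -/
def trunc (m : ℕ) (x : Config d) : Config d := fun v => if normInf v ≤ m then x v else 0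

lemma trunc_image_finite (m : ℕ) {X : Set (Config d)} (A : Finset ℤ)
    (hA : ∀ x ∈ X, ∀ v : ZD d, x v ∈ A) : (trunc m '' X).Finite := by
  classical
  set B : Finset (ZD d) := Fintype.piFinset fun _ : Fin d => Finset.Icc (-(m : ℤ)) (m : ℤ)
    with hB
  have hBmem : ∀ v : ZD d, v ∈ B ↔ normInf v ≤ m := by
    intro v
    rw [hB, Fintype.mem_piFinset]
    rw [normInf_le_iff]
    constructor
    · intro h i
      have := h i
      rw [Finset.mem_Icc] at this
      omega
    · intro h i
      have := h i
      rw [Finset.mem_Icc]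
      omega
  set T : Set (Config d) :=
    {g | (∀ v : ZD d, g v ∈ insert (0 : ℤ) A) ∧ ∀ v : ZD d, v ∉ B → g v = 0} with hT
  have hTfin : T.Finite := by
    rw [← Set.finite_coe_iff]
    have hinj : Function.Injective
        (fun g : T => (fun v : B =>
          (⟨(g : Config d) v, g.2.1 v⟩ : {z : ℤ // z ∈ insert (0 : ℤ) A}))) := by
      intro g₁ g₂ hg
      apply Subtype.ext
      funext v
      by_cases hv : v ∈ B
      · have := congrFun hg ⟨v, hv⟩
        exact Subtype.mk_eq_mk.mp this
      · rw [g₁.2.2 v hv, g₂.2.2 v hv]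
    exact Finite.of_injective _ hinj
  refine hTfin.subset ?_
  rintro _ ⟨x, hx, rfl⟩
  constructor
  · intro v
    unfold trunc
    split
    · exact Finset.mem_insert_of_mem (hA x hx v)
    · exact Finset.mem_insert_self 0 A
  · intro v hv
    rw [hBmem] at hv
    exact if_neg hv

lemma trunc_agree (m : ℕ) (x : Config d) : AgreeOn (m + 1) x (trunc m x) := by
  intro v hv
  unfold trunc
  rw [if_pos (by omega)]

/-- Key density lemma: if the union of a chain is dense in `X`, then for every `m` some
single member of the chain already approximates every point of `X` to within `2^{-m}`. -/
lemma chain_approx {X : Set (Config d)} (hXsh : IsShift X) {c : Set (Set (Config d))}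
    (hc : IsChain (· ⊆ ·) c) (hne : c.Nonempty)
    (hdense : X ⊆ deltaClosure (⋃₀ c)) (m : ℕ) :
    ∃ C ∈ c, ∀ x ∈ X, ∃ y ∈ C, AgreeOn m x y := by
  classical
  obtain ⟨A, hA⟩ := hXsh.2.1
  have hPfin : (trunc m '' X).Finite := trunc_image_finite m A hA
  have hch : ∀ p : Config d, ∃ Y : Set (Config d),
      p ∈ trunc m '' X → Y ∈ c ∧ ∃ y ∈ Y, AgreeOn m p y := by
    intro p
    by_cases hp : p ∈ trunc m '' X
    · obtain ⟨x, hxX, rfl⟩ := hp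
      obtain ⟨a, haU, hag⟩ := mem_deltaClosure_iff.mp (hdense hxX) m
      obtain ⟨Y, hYc, haY⟩ := haU
      exact ⟨Y, fun _ => ⟨hYc, a, haY,
        (((trunc_agree m x).mono (by omega)).symm').trans' hag⟩⟩
    · exact ⟨∅, fun h => absurd h hp⟩
  choose Y hY using hch
  obtain ⟨C, hCc, hC⟩ := chain_ub_of_finite hc hne (hPfin.image Y)
    (by rintro _ ⟨p, hp, rfl⟩; exact (hY p hp).1)
  refine ⟨C, hCc, fun x hxX => ?_⟩
  have hp : trunc m x ∈ trunc m '' X := ⟨x, hxX, rfl⟩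
  obtain ⟨hYc, y, hyY, hag⟩ := hY (trunc m x) hp
  refine ⟨y, hC _ (Set.mem_image_of_mem Y hp) hyY,
    ((trunc_agree m x).mono (by omega)).trans' hag⟩


open Classical in
/-- A monotone selection from a chain. -/
noncomputable def chainSel {α : Type*} (Csel : ℕ → Set α) : ℕ → Set α
  | 0 => Csel 0
  | (k + 1) => if Csel (k + 1) ⊆ chainSel Csel k then chainSel Csel k else Csel (k + 1)

lemma chain_monotone_select {α : Type*} {c : Set (Set α)} (hc : IsChain (· ⊆ ·) c)
    (Csel : ℕ → Set α) (hCselc : ∀ m, Csel m ∈ c) :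
    ∃ D : ℕ → Set α, (∀ m, D m ∈ c) ∧ (∀ m, D m ⊆ D (m + 1)) ∧ ∀ m, Csel m ⊆ D m := by
  have key : ∀ m, chainSel Csel m ∈ c ∧ Csel m ⊆ chainSel Csel m := by
    intro m
    induction m with
    | zero => exact ⟨hCselc 0, subset_rfl⟩
    | succ k ih =>
      rw [chainSel]
      split
      · rename_i h
        exact ⟨ih.1, h⟩
      · exact ⟨hCselc (k + 1), subset_rfl⟩
  refine ⟨chainSel Csel, fun m => (key m).1, fun k => ?_, fun m => (key m).2⟩
  rw [chainSel]
  split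
  · exact subset_rfl
  · rename_i h
    rcases hc.total (key k).1 (hCselc (k + 1)) with h' | h'
    · exact h'
    · exact absurd h' h

end Aux


/-- If `Z` is an outcast of a shift `X`, there is a strictly increasing
sequence of subsystems of `X` starting at `Z` whose union is dense in `X`; in
particular, a shift possessing an outcast is not isolated in `S^d`. -/
theorem outcast_gives_increasing_chain_and_not_isolated
    (d : ℕ) (hd : 1 ≤ d) (X Z : Set (Config d)) (hX : IsShift X) (hZ : IsOutcast Z X) :
    (∃ W : ℕ → Set (Config d), (∀ n : ℕ, IsSubsystem (W n) X) ∧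
      (∀ n : ℕ, W n ⊂ W (n + 1)) ∧ W 0 = Z ∧ deltaClosure (⋃ n : ℕ, W n) = X) ∧
    ¬ IsolatedIn {Y : Set (Config d) | IsShift Y} X := by
  classical
  set P : Set (Set (Config d)) := {Y | IsSubsystem Y X ∧ Y ≠ X ∧ Z ⊆ Y} with hP
  have hZP : Z ∈ P := ⟨hZ.1, hZ.2.1, subset_rfl⟩
  have hex : ∃ c, c ⊆ P ∧ IsChain (· ⊆ ·) c ∧ c.Nonempty ∧ ∀ u ∈ P, ∃ s ∈ c, ¬ s ⊆ u := by
    by_contra hcon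
    push_neg at hcon
    obtain ⟨M, hZM, hMmax⟩ :=
      zorn_subset_nonempty P (fun c hc hch hne => hcon c hc hch hne) Z hZP
    have hMP : M ∈ P := hMmax.1
    refine hZ.2.2 M ⟨hMP.1, hMP.2.1, ?_⟩ hZM
    intro Z' hZ'sub hMZ'
    by_contra hZ'ne
    have hZ'P : Z' ∈ P := ⟨hZ'sub, hZ'ne, hZM.trans hMZ'.subset⟩
    exact hMZ'.not_subset (hMmax.2 hZ'P hMZ'.subset)
  obtain ⟨c, hcP, hchain, hcne, hnoub⟩ := hex
  have hUXsub : ⋃₀ c ⊆ X := by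
    rintro y ⟨Y, hYc, hyY⟩
    exact (hcP hYc).1.2.1 hyY
  have hUsub : IsSubsystem (deltaClosure (⋃₀ c)) X := by
    refine ⟨?_, deltaClosure_subset_of_closed hUXsub hX.2.2.1,
      isDeltaClosed_deltaClosure _, deltaClosure_shift_invariant ?_⟩
    · obtain ⟨Y, hYc⟩ := hcne
      obtain ⟨y, hy⟩ := (hcP hYc).1.1
      exact ⟨y, subset_deltaClosure _ ⟨Y, hYc, hy⟩⟩
    · rintro u a ⟨Y, hYc, haY⟩
      exact ⟨Y, hYc, (hcP hYc).1.2.2.2 u a haY⟩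
  have hcU : ∀ s ∈ c, s ⊆ deltaClosure (⋃₀ c) := fun s hs =>
    (Set.subset_sUnion_of_mem hs).trans (subset_deltaClosure _)
  have hZU : Z ⊆ deltaClosure (⋃₀ c) := by
    obtain ⟨Y, hY⟩ := hcne
    exact ((hcP hY).2.2).trans (hcU Y hY)
  have hUX : deltaClosure (⋃₀ c) = X := by
    by_contra hne
    obtain ⟨s, hsc, hsU⟩ := hnoub (deltaClosure (⋃₀ c)) ⟨hUsub, hne, hZU⟩
    exact hsU (hcU s hsc)
  have hdense : X ⊆ deltaClosure (⋃₀ c) := hUX.ge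
  choose Csel hCselc hCsel using chain_approx hX hchain hcne hdense
  obtain ⟨D, hDc, hDstep, hCselD⟩ := chain_monotone_select hchain Csel hCselc
  have Dmono : ∀ a b : ℕ, a ≤ b → D a ⊆ D b := by
    intro a b h
    induction b, h using Nat.le_induction with
    | base => exact subset_rfl
    | succ b hb ih => exact ih.trans (hDstep b)
  have hDapprox : ∀ m : ℕ, ∀ x ∈ X, ∃ y ∈ D m, AgreeOn m x y := by
    intro m x hx
    obtain ⟨y, hy, ha⟩ := hCsel m x hx
    exact ⟨y, hCselD m hy, ha⟩
  have hDP : ∀ m, D m ∈ P := fun m => hcP (hDc m)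
  have hstrict : ∀ n : ℕ, ∃ k, n < k ∧ D n ⊂ D k := by
    intro n
    by_contra hcon
    push_neg at hcon
    have heq : ∀ k, n < k → D k = D n := by
      intro k hk
      have h1 := hcon k hk
      rw [Set.ssubset_iff_subset_ne] at h1
      push_neg at h1
      exact (h1 (Dmono n k hk.le)).symm
    have hXD : X ⊆ D n := by
      intro x hx
      have hcl : x ∈ deltaClosure (D n) := by
        rw [mem_deltaClosure_iff]
        intro m
        obtain ⟨y, hy, ha⟩ := hDapprox (max m (n + 1)) x hx
        rw [heq (max m (n + 1)) (by omega)] at hy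
        exact ⟨y, hy, ha.mono (le_max_left _ _)⟩
      exact (hDP n).1.2.2.1 hcl
    exact (hDP n).2.1 (Set.Subset.antisymm (hDP n).1.2.1 hXD)
  obtain ⟨ψ, hψ0, hψ⟩ : ∃ ψ : ℕ → ℕ, ψ 0 = 0 ∧
      ∀ n, ψ n < ψ (n + 1) ∧ D (ψ n) ⊂ D (ψ (n + 1)) := by
    choose f hf1 hf2 using hstrict
    exact ⟨fun n => Nat.rec 0 (fun _ k => f k) n, rfl, fun n => ⟨hf1 _, hf2 _⟩⟩
  have hψge : ∀ n, n ≤ ψ n := by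
    intro n
    induction n with
    | zero => exact Nat.zero_le _
    | succ k ih =>
      have := (hψ k).1
      omega
  constructor
  · refine ⟨fun n => Nat.casesOn n Z (fun k => D (ψ (k + 1))), ?_, ?_, rfl, ?_⟩
    · intro n
      cases n with
      | zero => exact hZ.1
      | succ k => exact (hDP _).1
    · intro n
      cases n with
      | zero =>
        have hZD : Z ⊆ D (ψ 0) := (hDP (ψ 0)).2.2
        exact ssubset_of_subset_of_ssubset hZD (hψ 0).2
      | succ k => exact (hψ (k + 1)).2
    · apply Set.Subset.antisymm
      · refine deltaClosure_subset_of_closed ?_ hX.2.2.1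
        intro y hy
        obtain ⟨n, hn⟩ := Set.mem_iUnion.mp hy
        cases n with
        | zero => exact hZ.1.2.1 hn
        | succ k => exact (hDP _).1.2.1 hn
      · intro x hx
        rw [mem_deltaClosure_iff]
        intro m
        obtain ⟨y, hy, ha⟩ := hDapprox m x hx
        have hsub : D m ⊆ D (ψ (m + 1)) :=
          Dmono m (ψ (m + 1)) (le_trans (by omega) (hψge (m + 1)))
        exact ⟨y, Set.mem_iUnion.mpr ⟨m + 1, hsub hy⟩, ha⟩
  · rintro ⟨hXS, ε, hε, hiso⟩
    obtain ⟨m, hm⟩ := exists_neg_zpow_lt hε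
    have hDX : D m ≠ X := (hDP m).2.1
    have hDsubsys : IsSubsystem (D m) X := (hDP m).1
    have hshift : IsShift (D m) := by
      obtain ⟨A, hA⟩ := hX.2.1
      exact ⟨hDsubsys.1, ⟨A, fun x hx v => hA x (hDsubsys.2.1 hx) v⟩,
        hDsubsys.2.2.1, hDsubsys.2.2.2⟩
    haveI hXneI : Nonempty ↥X := hX.1.to_subtype
    haveI hDneI : Nonempty ↥(D m) := hDsubsys.1.to_subtype
    have hcomp1 : (⨆ x : X, ⨅ z : (D m), deltaDist (x : Config d) (z : Config d)) < ε := by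
      refine lt_of_le_of_lt (ciSup_le fun x => ?_) hm
      obtain ⟨y, hy, ha⟩ := hDapprox m x x.2
      have hbdd : BddBelow (Set.range fun z : (D m) => deltaDist (x : Config d) (z : Config d)) := by
        refine ⟨0, ?_⟩
        rintro r ⟨z, rfl⟩
        exact deltaDist_nonneg _ _
      exact le_trans (ciInf_le hbdd ⟨y, hy⟩) (deltaDist_le_of_agree ha)
    have hcomp2 : (⨆ z : (D m), ⨅ x : X, deltaDist (x : Config d) (z : Config d)) < ε := by
      refine lt_of_le_of_lt (ciSup_le fun z => ?_) hε
      have hbdd : BddBelow (Set.range fun x : X => deltaDist (x : Config d) (z : Config d)) := by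
        refine ⟨0, ?_⟩
        rintro r ⟨x, rfl⟩
        exact deltaDist_nonneg _ _
      refine le_trans (ciInf_le hbdd ⟨(z : Config d), hDsubsys.2.1 z.2⟩) ?_
      exact le_of_eq (deltaDist_self _)
    have hH : deltaH X (D m) < ε := max_lt hcomp1 hcomp2
    exact hDX (hiso (D m) hshift hH)
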